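/- Let P be a poset and θ an equivalence relation on P. The relation on the quotient set P/θ defined by [p] ≤ [q] iff there exist p' ∈ [p] and q' ∈ [q] with p' ≤ q' is a partial order if and only if θ is a weak order congruence. -/
import Mathlib


/-- The quotient relation on `P/θ`: `[p] ≤ [q]` iff there exist representatives
`p' ∈ [p]`, `q' ∈ [q]` with `p' ≤ q'`. -/
def quotRel {P : Type*} [PartialOrder P] (θ : Setoid P) :
    Quotient θ → Quotient θ → Prop :=
  fun a b => ∃ p q : P, a = Quotient.mk θ p ∧ b = Quotient.mk θ q ∧ p ≤ q

/-- `θ` is a weak order congruence. -/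
def IsWeakOrderCongruence {P : Type*} [PartialOrder P] (θ : Setoid P) : Prop :=
  (∀ p q p' q' : P, p ≤ q → θ.r q q' → q' ≤ p' → θ.r p' p → θ.r p q) ∧
  (∀ p q q' r : P, p ≤ q → θ.r q q' → q' ≤ r →
    ∃ p' r' : P, θ.r p p' ∧ p' ≤ r' ∧ θ.r r' r)

theorem quotRel_isPartialOrder_iff_weakOrderCongruence
    {P : Type*} [PartialOrder P] (θ : Setoid P) :
    IsPartialOrder (Quotient θ) (quotRel θ) ↔ IsWeakOrderCongruence θ := by
  constructor
  · intro h
    constructor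
    · intro p q p' q' hpq hqq' hq'p' hp'p
      have h1 : quotRel θ (Quotient.mk θ p) (Quotient.mk θ q) := ⟨p, q, rfl, rfl, hpq⟩
      have h2 : quotRel θ (Quotient.mk θ q) (Quotient.mk θ p) :=
        ⟨q', p', Quotient.sound hqq', (Quotient.sound hp'p).symm, hq'p'⟩
      exact Quotient.exact (h.antisymm _ _ h1 h2)
    · intro p q q' r hpq hqq' hq'r
      have h1 : quotRel θ (Quotient.mk θ p) (Quotient.mk θ q) := ⟨p, q, rfl, rfl, hpq⟩
      have h2 : quotRel θ (Quotient.mk θ q) (Quotient.mk θ r) :=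
        ⟨q', r, Quotient.sound hqq', rfl, hq'r⟩
      obtain ⟨p', r', hp, hr, hle⟩ := h.trans _ _ _ h1 h2
      exact ⟨p', r', Quotient.exact hp, hle, θ.symm (Quotient.exact hr)⟩
  · intro ⟨h1, h2⟩
    refine { refl := ?_, trans := ?_, antisymm := ?_ }
    case refine_1 =>
      intro a
      obtain ⟨p, rfl⟩ := Quotient.exists_rep a
      exact ⟨p, p, rfl, rfl, le_refl p⟩
    case refine_2 =>
      rintro a b c ⟨p, q, rfl, rfl, hpq⟩ ⟨q2, r, hb, rfl, hq2r⟩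
      have hq : θ.r q q2 := Quotient.exact hb
      obtain ⟨p', r', hpp', hle, hr'r⟩ := h2 p q q2 r hpq hq hq2r
      exact ⟨p', r', Quotient.sound hpp', (Quotient.sound hr'r).symm, hle⟩
    case refine_3 =>
      rintro a b ⟨p, q, rfl, rfl, hpq⟩ ⟨q2, p2, hb, ha, hq2p2⟩
      exact Quotient.sound (h1 p q p2 q2 hpq (Quotient.exact hb)
        hq2p2 (Quotient.exact ha.symm))
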